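/- Let A be a C*-algebra and ρ : A → M(A) a faithful non-degenerate *-homomorphism into the multiplier algebra. If a ∈ M(A) satisfies ρ(a) ∈ A (where ρ denotes the strictly continuous extension to M(A)), then a ∈ A. -/

import Mathlib

open scoped MultiplierAlgebra
open Filter Topology

section Aux

variable {A : Type*} [NonUnitalCStarAlgebra A]

/-- Every non-unital C⋆-algebra admits a (two-sided, self-adjoint, contractive)
approximate unit, packaged as a filter. -/
lemma exists_approx_unit_aux (A : Type*) [NonUnitalCStarAlgebra A] :
    ∃ l : Filter A, l.NeBot ∧ (∀ m : A, Tendsto (m * ·) l (𝓝 m)) ∧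
      (∀ m : A, Tendsto (· * m) l (𝓝 m)) ∧ (∀ᶠ x in l, star x = x ∧ ‖x‖ ≤ 1) := by
  letI : PartialOrder (Unitization ℂ A) := CStarAlgebra.spectralOrder _
  haveI : StarOrderedRing (Unitization ℂ A) := CStarAlgebra.spectralOrderedRing _
  letI : PartialOrder A :=
    PartialOrder.lift (Unitization.inr : A → Unitization ℂ A) Unitization.inr_injective
  have h0 : ∀ w : A, (0 ≤ w) ↔ (0 : Unitization ℂ A) ≤ (w : Unitization ℂ A) := by
    intro w
    rw [show ((0 : Unitization ℂ A)) = ((0 : A) : Unitization ℂ A) from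
      (Unitization.inr_zero ℂ).symm]
    exact Iff.rfl
  haveI : StarOrderedRing A := by
    refine .of_nonneg_iff' (fun {x y} h z => ?_) (fun x => ?_)
    · show ((z + x : A) : Unitization ℂ A) ≤ ((z + y : A) : Unitization ℂ A)
      rw [Unitization.inr_add, Unitization.inr_add]
      exact add_le_add le_rfl (show (x : Unitization ℂ A) ≤ (y : Unitization ℂ A) from h)
    · rw [h0 x]
      constructor
      · intro hx
        have hsa : IsSelfAdjoint x := by
          have h1 : ((star x : A) : Unitization ℂ A) = (x : Unitization ℂ A) := by
            rw [Unitization.inr_star]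
            exact (IsSelfAdjoint.of_nonneg hx).star_eq
          exact Unitization.inr_injective h1
        have hq : ∀ t ∈ quasispectrum ℝ x, 0 ≤ t := by
          rw [Unitization.quasispectrum_eq_spectrum_inr' ℝ ℂ x]
          exact fun t ht => spectrum_nonneg_of_nonneg hx ht
        set s := cfcₙ Real.sqrt x with hs_def
        have hs : IsSelfAdjoint s := cfcₙ_predicate _ x
        refine ⟨s, ?_⟩
        have hmul : star s * s = x := by
          calc star s * s = s * s := by rw [hs.star_eq]
            _ = cfcₙ (fun t : ℝ => Real.sqrt t * Real.sqrt t) x :=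
                (cfcₙ_mul _ _ x (Real.continuous_sqrt.continuousOn) (by simp)
                  (Real.continuous_sqrt.continuousOn) (by simp)).symm
            _ = cfcₙ (id : ℝ → ℝ) x := by
                refine cfcₙ_congr fun t ht => ?_
                exact Real.mul_self_sqrt (hq t ht)
            _ = x := cfcₙ_id ℝ x
        exact hmul.symm
      · rintro ⟨s, rfl⟩
        rw [Unitization.inr_mul, Unitization.inr_star]
        exact star_mul_self_nonneg _
  have hl := CStarAlgebra.increasingApproximateUnit A
  exact ⟨CStarAlgebra.approximateUnit A, hl.neBot, hl.tendsto_mul_left,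
    hl.tendsto_mul_right, (hl.eventually_star_eq.and hl.eventually_norm).mono fun x hx => hx⟩

/-- In a C⋆-algebra, left multiplication separates points. -/
lemma eq_of_forall_mul_left_aux {u v : A} (h : ∀ d : A, d * u = d * v) : u = v := by
  have h2 : star (u - v) * (u - v) = 0 := by
    rw [mul_sub, sub_eq_zero]
    exact h (star (u - v))
  rw [CStarRing.star_mul_self_eq_zero_iff] at h2
  exact sub_eq_zero.mp h2

/-- In a C⋆-algebra, right multiplication separates points. -/
lemma eq_of_forall_mul_right_aux {u v : A} (h : ∀ d : A, u * d = v * d) : u = v := by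
  have h2 : (u - v) * star (u - v) = 0 := by
    rw [sub_mul, sub_eq_zero]
    exact h (star (u - v))
  rw [CStarRing.mul_star_self_eq_zero_iff] at h2
  exact sub_eq_zero.mp h2

lemma fst_mul_right_aux (m : 𝓜(ℂ, A)) (x y : A) : m.fst (x * y) = m.fst x * y := by
  apply eq_of_forall_mul_left_aux
  intro d
  calc d * m.fst (x * y) = m.snd d * (x * y) := (m.central d (x * y)).symm
    _ = (m.snd d * x) * y := (mul_assoc _ _ _).symm
    _ = (d * m.fst x) * y := by rw [m.central]
    _ = d * (m.fst x * y) := mul_assoc _ _ _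

lemma snd_mul_left_aux (m : 𝓜(ℂ, A)) (x y : A) : m.snd (x * y) = x * m.snd y := by
  apply eq_of_forall_mul_right_aux
  intro d
  calc m.snd (x * y) * d = (x * y) * m.fst d := m.central _ _
    _ = x * (y * m.fst d) := mul_assoc _ _ _
    _ = x * (m.snd y * d) := by rw [m.central]
    _ = (x * m.snd y) * d := (mul_assoc _ _ _).symm

lemma mul_coe_aux (m : 𝓜(ℂ, A)) (e : A) :
    m * (e : 𝓜(ℂ, A)) = ((m.fst e : A) : 𝓜(ℂ, A)) := by
  refine DoubleCentralizer.ext _ _ _ _ (Prod.ext ?_ ?_)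
  · show (m * (e : 𝓜(ℂ, A))).fst = ((m.fst e : A) : 𝓜(ℂ, A)).fst
    refine ContinuousLinearMap.ext fun c => ?_
    show m.fst (e * c) = m.fst e * c
    exact fst_mul_right_aux m e c
  · show (m * (e : 𝓜(ℂ, A))).snd = ((m.fst e : A) : 𝓜(ℂ, A)).snd
    refine ContinuousLinearMap.ext fun c => ?_
    show m.snd c * e = c * m.fst e
    exact m.central c e

lemma coe_mul_aux (e : A) (m : 𝓜(ℂ, A)) :
    (e : 𝓜(ℂ, A)) * m = ((m.snd e : A) : 𝓜(ℂ, A)) := by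
  refine DoubleCentralizer.ext _ _ _ _ (Prod.ext ?_ ?_)
  · show ((e : 𝓜(ℂ, A)) * m).fst = ((m.snd e : A) : 𝓜(ℂ, A)).fst
    refine ContinuousLinearMap.ext fun c => ?_
    show e * m.fst c = m.snd e * c
    exact (m.central e c).symm
  · show ((e : 𝓜(ℂ, A)) * m).snd = ((m.snd e : A) : 𝓜(ℂ, A)).snd
    refine ContinuousLinearMap.ext fun c => ?_
    show m.snd (c * e) = c * m.snd e
    exact snd_mul_left_aux m c e

lemma coe_injective_aux : Function.Injective ((↑) : A → 𝓜(ℂ, A)) := by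
  intro x y h
  apply eq_of_forall_mul_right_aux
  intro d
  have h1 : (x : 𝓜(ℂ, A)).fst d = (y : 𝓜(ℂ, A)).fst d := by rw [h]
  simpa using h1

lemma norm_coe_aux (x : A) : ‖(x : 𝓜(ℂ, A))‖ = ‖x‖ :=
  NonUnitalStarAlgHom.norm_map (DoubleCentralizer.coeHom (𝕜 := ℂ) (A := A))
    coe_injective_aux x

lemma coe_sub_aux (x y : A) :
    ((x - y : A) : 𝓜(ℂ, A)) = (x : 𝓜(ℂ, A)) - (y : 𝓜(ℂ, A)) :=
  map_sub (DoubleCentralizer.coeHom (𝕜 := ℂ) (A := A)) x y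

lemma continuous_fst_apply_aux (d : A) :
    Continuous (fun m : 𝓜(ℂ, A) => m.fst d) := by
  refine (LipschitzWith.of_dist_le_mul (K := ‖d‖₊) fun m m' => ?_).continuous
  rw [dist_eq_norm, dist_eq_norm]
  have h1 : m.fst d - m'.fst d = (m - m').fst d := by
    rw [DoubleCentralizer.sub_fst, ContinuousLinearMap.sub_apply]
  rw [h1]
  calc ‖(m - m').fst d‖ ≤ ‖(m - m').fst‖ * ‖d‖ := (m - m').fst.le_opNorm d
    _ = ‖d‖ * ‖m - m'‖ := by rw [DoubleCentralizer.norm_fst, mul_comm]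

end Aux

/-- **Lemma (position in the multiplier algebra).**
Let `A` be a C*-algebra and `ρ : A → M(A)` a faithful non-degenerate *-homomorphism
into the multiplier algebra, with strictly continuous extension `ρbar : M(A) → M(A)`.
If `a ∈ M(A)` satisfies `ρbar a ∈ A`, then `a ∈ A`. -/
theorem mem_base_of_strict_extension_mem_base
    {A : Type*} [NonUnitalCStarAlgebra A]
    (ρ : A →⋆ₙₐ[ℂ] 𝓜(ℂ, A))
    (hfaithful : Function.Injective ρ)
    (hnondeg : Dense ((Submodule.span ℂ {y : A | ∃ b c : A, y = (ρ b).fst c}) : Set A))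
    (ρbar : 𝓜(ℂ, A) →⋆ₙₐ[ℂ] 𝓜(ℂ, A))
    (hext : ∀ a : A, ρbar (a : 𝓜(ℂ, A)) = ρ a)
    (hstrict : ∀ (x : ℕ → 𝓜(ℂ, A)) (y : 𝓜(ℂ, A)),
      (∀ a : A, Tendsto (fun n => (x n).fst a) atTop (𝓝 (y.fst a)) ∧
        Tendsto (fun n => (x n).snd a) atTop (𝓝 (y.snd a))) →
      (∀ a : A, Tendsto (fun n => (ρbar (x n)).fst a) atTop (𝓝 ((ρbar y).fst a)) ∧
        Tendsto (fun n => (ρbar (x n)).snd a) atTop (𝓝 ((ρbar y).snd a))))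
    (a : 𝓜(ℂ, A)) (ha : ∃ b : A, ρbar a = (b : 𝓜(ℂ, A))) :
    ∃ c : A, a = (c : 𝓜(ℂ, A)) := by
  obtain ⟨b, hb⟩ := ha
  obtain ⟨l, hne, hml, hmr, hev⟩ := exists_approx_unit_aux A
  haveI := hne
  -- `ρ` is isometric
  have hρnorm : ∀ x : A, ‖ρ x‖ = ‖x‖ := fun x =>
    NonUnitalStarAlgHom.norm_map ρ hfaithful x
  have hρcont : Continuous ρ :=
    (NonUnitalStarAlgHom.isometry ρ hfaithful).continuous
  -- key identity : ρ (a • e) = b • ρ(e) inside A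
  have hkey : ∀ e : A, ρ (a.fst e) = (((ρ e).snd b : A) : 𝓜(ℂ, A)) := by
    intro e
    calc ρ (a.fst e) = ρbar ((a.fst e : A) : 𝓜(ℂ, A)) := (hext _).symm
      _ = ρbar (a * (e : 𝓜(ℂ, A))) := by rw [mul_coe_aux]
      _ = ρbar a * ρbar (e : 𝓜(ℂ, A)) := map_mul ρbar a _
      _ = (b : 𝓜(ℂ, A)) * ρ e := by rw [hb, hext]
      _ = (((ρ e).snd b : A) : 𝓜(ℂ, A)) := coe_mul_aux b (ρ e)
  -- ρ(e) is an approximate unit on the left (by non-degeneracy)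
  have h1 : ∀ d : A, Tendsto (fun e => (ρ e).fst d) l (𝓝 d) := by
    have hspan : ∀ d ∈ Submodule.span ℂ {y : A | ∃ p q : A, y = (ρ p).fst q},
        Tendsto (fun e => (ρ e).fst d) l (𝓝 d) := by
      intro d hd
      induction hd using Submodule.span_induction with
      | mem x hx =>
        obtain ⟨p, q, rfl⟩ := hx
        have hcont : Continuous (fun x : A => (ρ x).fst q) :=
          (continuous_fst_apply_aux q).comp hρcont
        have h2 := (hcont.tendsto p).comp (hmr p)
        refine h2.congr fun e => ?_
        show (ρ (e * p)).fst q = (ρ e).fst ((ρ p).fst q)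
        rw [map_mul, DoubleCentralizer.mul_fst, ContinuousLinearMap.mul_apply]
      | zero => simpa using (tendsto_const_nhds : Tendsto (fun _ : A => (0 : A)) l _)
      | add x y _ _ hx' hy' => simpa using hx'.add hy'
      | smul c x _ hx' => simpa using hx'.const_smul c
    intro d
    rw [Metric.tendsto_nhds]
    intro ε hε
    obtain ⟨d', hd'mem, hdd'⟩ := hnondeg.exists_dist_lt d (show (0 : ℝ) < ε / 3 by linarith)
    have h3 := Metric.tendsto_nhds.mp (hspan d' hd'mem) (ε / 3) (by linarith)
    filter_upwards [h3, hev] with e he hnorm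
    have hbound : dist ((ρ e).fst d) ((ρ e).fst d') ≤ dist d d' := by
      rw [dist_eq_norm, dist_eq_norm, ← map_sub]
      calc ‖(ρ e).fst (d - d')‖ ≤ ‖(ρ e).fst‖ * ‖d - d'‖ := (ρ e).fst.le_opNorm _
        _ ≤ 1 * ‖d - d'‖ := by
            have h4 : ‖(ρ e).fst‖ ≤ 1 := by
              rw [DoubleCentralizer.norm_fst, hρnorm]
              exact hnorm.2
            exact mul_le_mul_of_nonneg_right h4 (norm_nonneg _)
        _ = ‖d - d'‖ := one_mul _
    calc dist ((ρ e).fst d) d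
        ≤ dist ((ρ e).fst d) ((ρ e).fst d') + dist ((ρ e).fst d') d' + dist d' d :=
          dist_triangle4 _ _ _ _
      _ < ε / 3 + ε / 3 + ε / 3 := by
          rw [dist_comm d' d]
          exact add_lt_add (add_lt_add (hbound.trans_lt hdd') he) hdd'
      _ = ε := by ring
  -- hence ρ(e) is an approximate unit on the right of b
  have hg : Tendsto (fun e => (ρ e).snd b) l (𝓝 b) := by
    have h2 : Tendsto (fun e => star ((ρ e).fst (star b))) l (𝓝 (star (star b))) :=
      (continuous_star.tendsto _).comp (h1 (star b))
    rw [star_star] at h2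
    refine h2.congr' ?_
    filter_upwards [hev] with e he
    calc star ((ρ e).fst (star b)) = (star (ρ e)).snd b :=
          (DoubleCentralizer.star_snd (ρ e) b).symm
      _ = (ρ (star e)).snd b := by rw [map_star]
      _ = (ρ e).snd b := by rw [he.1]
  -- transfer Cauchy-ness through the isometric identification
  have hdist : ∀ e e' : A,
      dist (a.fst e) (a.fst e') = dist ((ρ e).snd b) ((ρ e').snd b) := by
    intro e e'
    rw [dist_eq_norm, dist_eq_norm, ← hρnorm, map_sub, hkey, hkey, ← coe_sub_aux,
      norm_coe_aux]
  have hcauchy : Cauchy (Filter.map (fun e => a.fst e) l) := by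
    have hgc : Cauchy (Filter.map (fun e => (ρ e).snd b) l) := hg.cauchy_map
    rw [Metric.cauchy_iff] at hgc ⊢
    refine ⟨Filter.map_neBot, fun ε hε => ?_⟩
    obtain ⟨t, htl, ht⟩ := hgc.2 ε hε
    refine ⟨(fun e => a.fst e) '' ((fun e => (ρ e).snd b) ⁻¹' t), ?_, ?_⟩
    · exact Filter.mem_map.mpr (Filter.mem_of_superset htl fun e he => Set.subset_preimage_image _ _ he)
    · rintro x ⟨e, he, rfl⟩ y ⟨e', he', rfl⟩
      rw [hdist]
      exact ht _ he _ he'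
  obtain ⟨c, hc⟩ := CompleteSpace.complete hcauchy
  have hc' : Tendsto (fun e => a.fst e) l (𝓝 c) := hc
  refine ⟨c, ?_⟩
  refine DoubleCentralizer.ext _ _ _ _ (Prod.ext ?_ ?_)
  · show a.fst = ((c : 𝓜(ℂ, A))).fst
    refine ContinuousLinearMap.ext fun d => ?_
    have t1 : Tendsto (fun e => a.fst e * d) l (𝓝 (c * d)) := hc'.mul tendsto_const_nhds
    have t2 : Tendsto (fun e => a.fst (e * d)) l (𝓝 (a.fst d)) :=
      (a.fst.continuous.tendsto d).comp (hmr d)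
    have heq : (fun e => a.fst (e * d)) = fun e => a.fst e * d :=
      funext fun e => fst_mul_right_aux a e d
    rw [heq] at t2
    have h5 : a.fst d = c * d := tendsto_nhds_unique t2 t1
    rw [h5]
    show c * d = (c : 𝓜(ℂ, A)).fst d
    simp
  · show a.snd = ((c : 𝓜(ℂ, A))).snd
    refine ContinuousLinearMap.ext fun d => ?_
    have t1 : Tendsto (fun e => d * a.fst e) l (𝓝 (d * c)) := tendsto_const_nhds.mul hc'
    have t2 : (fun e => d * a.fst e) = fun e => a.snd d * e :=
      funext fun e => (a.central d e).symm
    rw [t2] at t1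
    have h5 : a.snd d = d * c := tendsto_nhds_unique (hml (a.snd d)) t1
    rw [h5]
    show d * c = (c : 𝓜(ℂ, A)).snd d
    simp
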